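/- Let P be a coherent stratified propositional program with constraints, and let ¬P be obtained from P by replacing each constraint ':- l1,...,ln' with the rule 'v :- l1,...,ln' for a fresh atom v, and adding the constraint ':- not v'. Then ¬P is coherent if and only if P is incoherent. -/

import Mathlib

open Classical

/-- A propositional normal rule: optional head (none = constraint),
positive body atoms and (default-)negated body atoms. -/
structure ARule (α : Type) where
  head : Option α
  pos : Set α
  neg : Set α

/-- A propositional normal logic program. -/
abbrev AProgram (α : Type) := Set (ARule α)

namespace ASP

variable {α : Type}

def ARule.headSet (r : ARule α) : Set α := {a | r.head = some a}

def ARule.atoms (r : ARule α) : Set α := ARule.headSet r ∪ r.pos ∪ r.neg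

def progAtoms (P : AProgram α) : Set α := ⋃ r ∈ P, ARule.atoms r

def heads (P : AProgram α) : Set α := {a | ∃ r ∈ P, r.head = some a}

/-- The body of a rule is true in interpretation `I`. -/
def bodyTrue (I : Set α) (r : ARule α) : Prop :=
  r.pos ⊆ I ∧ ∀ a ∈ r.neg, a ∉ I

/-- `I` satisfies rule `r`. -/
def satRule (I : Set α) (r : ARule α) : Prop :=
  bodyTrue I r → ∃ h, r.head = some h ∧ h ∈ I

def isModel (I : Set α) (P : AProgram α) : Prop := ∀ r ∈ P, satRule I r

/-- Gelfond–Lifschitz reduct of `P` with respect to `I`. -/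
def reduct (P : AProgram α) (I : Set α) : AProgram α :=
  {r' | ∃ r ∈ P, (∀ a ∈ r.neg, a ∉ I) ∧ r' = ⟨r.head, r.pos, ∅⟩}

/-- `I` is an answer set of `P`: a minimal model of the reduct `P^I`. -/
def isAnswerSet (P : AProgram α) (I : Set α) : Prop :=
  isModel I (reduct P I) ∧ ∀ J, J ⊂ I → ¬ isModel J (reduct P I)

/-- A program is coherent if it has an answer set. -/
def coherent (P : AProgram α) : Prop := ∃ I, isAnswerSet P I

/-- `fix B M`: facts for atoms of `M` and constraints for atoms of `B \ M`. -/
def fixProg (B M : Set α) : AProgram α :=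
  {r | (∃ a ∈ M, r = ⟨some a, ∅, ∅⟩) ∨ (∃ a ∈ B \ M, r = ⟨none, {a}, ∅⟩)}

/-- A ground weak constraint `:~ pos, not neg [weight@level]`. -/
structure WeakC (α : Type) where
  pos : Set α
  neg : Set α
  weight : ℤ
  level : ℤ

def WeakC.atoms (w : WeakC α) : Set α := w.pos ∪ w.neg

/-- The body of a weak constraint is true in `I` (the weak constraint is violated). -/
def WeakC.violated (w : WeakC α) (I : Set α) : Prop :=
  w.pos ⊆ I ∧ ∀ a ∈ w.neg, a ∉ I

/-- Cost of interpretation `I` at level `l` for weak constraints `W`. -/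
noncomputable def cost (W : Finset (WeakC α)) (I : Set α) (l : ℤ) : ℤ :=
  ∑ w ∈ W.filter (fun w => w.level = l ∧ WeakC.violated w I), w.weight

/-- `I` is dominated by `J` with respect to the weak constraints `W`. -/
def dominated (W : Finset (WeakC α)) (I J : Set α) : Prop :=
  ∃ l, cost W I l > cost W J l ∧ ∀ l' > l, cost W I l' = cost W J l'

/-- `M` is an optimal answer set of program `P` with weak constraints `W`. -/
def optAS (P : AProgram α) (W : Finset (WeakC α)) (M : Set α) : Prop :=
  isAnswerSet P M ∧ ∀ M', isAnswerSet P M' → ¬ dominated W M M'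

/-- `sat(P)`: add `not s` to each rule body, plus a choice on the fresh atom `s`
 (rules `s :- not n` and `n :- not s`). -/
def satProg (s n : α) (P : AProgram α) : AProgram α :=
  ((fun r : ARule α => ARule.mk r.head r.pos (insert s r.neg)) '' P) ∪
    {⟨some s, ∅, {n}⟩, ⟨some n, ∅, {s}⟩}

/-- Complement `¬P` of a program with constraints: each constraint `:- B` becomes
 `v :- B`, and the constraint `:- not v` is added. -/
def complProg (v : α) (P : AProgram α) : AProgram α :=
  {r | r ∈ P ∧ r.head ≠ none} ∪
    {r' | ∃ r ∈ P, r.head = none ∧ r' = ⟨some v, r.pos, r.neg⟩} ∪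
    {⟨none, ∅, {v}⟩}

/-- Rules of `relaxed(P,l)`: keep rules with heads, turn each constraint `:- B`
into `unsat :- B`. -/
def relaxedRules (u : α) (P : AProgram α) : AProgram α :=
  {r | r ∈ P ∧ r.head ≠ none} ∪
    {r' | ∃ r ∈ P, r.head = none ∧ r' = ⟨some u, r.pos, r.neg⟩}

/-- The weak constraint `:~ unsat [1@l]` of `relaxed(P,l)`. -/
def relaxWeak (u : α) (l : ℤ) : WeakC α := ⟨{u}, ∅, 1, l⟩

/-- A stratification: positive dependencies do not increase the level,
negative dependencies strictly decrease it. -/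
def IsStratification (P : AProgram α) (lv : α → ℕ) : Prop :=
  ∀ r ∈ P, ∀ h, r.head = some h →
    (∀ a ∈ r.pos, lv a ≤ lv h) ∧ (∀ a ∈ r.neg, lv a < lv h)

def Stratified (P : AProgram α) : Prop := ∃ lv, IsStratification P lv

/-- `M` (an answer set of a program with atom base `B`) satisfies the constraint
program `C` iff `C ∪ fix_B(M)` is coherent. -/
def satisfiesC (C : AProgram α) (B M : Set α) : Prop := coherent (C ∪ fixProg B M)

end ASP

namespace ASPAux
open ASP

variable {α : Type}

/-- Derivability in the reduct of `Q` w.r.t. `I`. -/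
inductive Deriv (Q : AProgram α) (I : Set α) : α → Prop where
  | step (r : ARule α) (h : α) : r ∈ Q → r.head = some h →
      (∀ a ∈ r.neg, a ∉ I) → (∀ a ∈ r.pos, Deriv Q I a) → Deriv Q I h

lemma deriv_subset {Q : AProgram α} {I : Set α} (hmod : isModel I (reduct Q I)) :
    ∀ a, Deriv Q I a → a ∈ I := by
  intro a hd
  induction hd with
  | step r h hr hh hneg hpos ih =>
    have hmem : (⟨r.head, r.pos, ∅⟩ : ARule α) ∈ reduct Q I := ⟨r, hr, hneg, rfl⟩
    obtain ⟨h', hh', hmem'⟩ := hmod _ hmem ⟨fun a ha => ih a ha, by simp⟩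
    simp only at hh'
    rw [hh] at hh'
    cases hh'
    exact hmem'

lemma answerSet_eq_deriv {Q : AProgram α} {I : Set α}
    (hheads : ∀ r ∈ Q, r.head ≠ none) (has : isAnswerSet Q I) :
    I = {a | Deriv Q I a} := by
  have hsub : {a | Deriv Q I a} ⊆ I := fun a ha => deriv_subset has.1 a ha
  have hmodel : isModel {a | Deriv Q I a} (reduct Q I) := by
    rintro r' ⟨r, hr, hneg, rfl⟩ hbody
    obtain ⟨h, hh⟩ := Option.ne_none_iff_exists'.mp (hheads r hr)
    exact ⟨h, hh, Deriv.step r h hr hh hneg (fun a ha => hbody.1 ha)⟩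
  by_contra hne
  exact has.2 _ (HasSubset.Subset.ssubset_of_ne hsub (fun he => hne he.symm)) hmodel

lemma deriv_transfer {Q : AProgram α} {lv : α → ℕ} (hstrat : IsStratification Q lv)
    {I J : Set α} {n : ℕ} (hIJ : ∀ b, lv b < n → (b ∈ I ↔ b ∈ J)) :
    ∀ a, Deriv Q I a → lv a ≤ n → Deriv Q J a := by
  intro a hd
  induction hd with
  | step r h hr hh hneg hpos ih =>
    intro hle
    obtain ⟨hposlv, hneglv⟩ := hstrat r hr h hh
    refine Deriv.step r h hr hh ?_ ?_
    · intro a ha haJ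
      exact hneg a ha (((hIJ a (lt_of_lt_of_le (hneglv a ha) hle)).mpr) haJ)
    · intro a ha
      exact ih a ha (le_trans (hposlv a ha) hle)

lemma strat_unique {Q : AProgram α} {lv : α → ℕ} (hstrat : IsStratification Q lv)
    (hheads : ∀ r ∈ Q, r.head ≠ none) {I J : Set α}
    (hI : isAnswerSet Q I) (hJ : isAnswerSet Q J) : I = J := by
  have hIeq := answerSet_eq_deriv hheads hI
  have hJeq := answerSet_eq_deriv hheads hJ
  have key : ∀ n, ∀ a, lv a < n → (a ∈ I ↔ a ∈ J) := by
    intro n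
    induction n with
    | zero => intro a ha; omega
    | succ n ihn =>
      intro a ha
      have hle : lv a ≤ n := by omega
      constructor
      · intro haI
        have : Deriv Q I a := by rw [hIeq] at haI; exact haI
        have : Deriv Q J a := deriv_transfer hstrat ihn a this hle
        rw [hJeq]; exact this
      · intro haJ
        have : Deriv Q J a := by rw [hJeq] at haJ; exact haJ
        have : Deriv Q I a := deriv_transfer hstrat (fun b hb => (ihn b hb).symm) a this hle
        rw [hIeq]; exact this
  ext a
  exact key (lv a + 1) a (Nat.lt_succ_self _)

lemma atom_ne {P : AProgram α} {v : α} (hv : v ∉ progAtoms P) {r : ARule α}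
    (hr : r ∈ P) : (∀ h, r.head = some h → h ≠ v) ∧ (∀ a ∈ r.pos, a ≠ v) ∧
      (∀ a ∈ r.neg, a ≠ v) := by
  have hmem : ∀ x ∈ ARule.atoms r, x ≠ v := by
    intro x hx hxv
    subst hxv
    exact hv (Set.mem_biUnion hr hx)
  refine ⟨fun h hh => hmem h (Or.inl (Or.inl hh)), fun a ha => hmem a (Or.inl (Or.inr ha)),
    fun a ha => hmem a (Or.inr ha)⟩

/-- Restriction to the non-constraint part of an answer set. -/
lemma answerSet_restrict {P : AProgram α} {I : Set α} (hI : isAnswerSet P I) :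
    isAnswerSet {r | r ∈ P ∧ r.head ≠ none} I := by
  constructor
  · rintro r' ⟨r, hr, hneg, rfl⟩
    exact hI.1 _ ⟨r, hr.1, hneg, rfl⟩
  · intro J hJ hJmod
    refine hI.2 J hJ ?_
    rintro r' ⟨r, hr, hneg, rfl⟩ hbody
    by_cases hhead : r.head = none
    · exfalso
      have hbI : bodyTrue I (⟨r.head, r.pos, ∅⟩ : ARule α) :=
        ⟨hbody.1.trans hJ.1, by simp⟩
      obtain ⟨h, hh, _⟩ := hI.1 _ ⟨r, hr, hneg, rfl⟩ hbI
      simp only at hh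
      rw [hhead] at hh; exact Option.some_ne_none h hh.symm
    · exact hJmod _ ⟨r, ⟨hr, hhead⟩, hneg, rfl⟩ hbody

end ASPAux

open ASP ASPAux in
/-- the complement `¬P` of a coherent stratified program with
constraints is coherent iff `P` is incoherent. -/
theorem complement_coherent_iff_incoherent {α : Type} (P : AProgram α) (v : α)
    (hfin : P.Finite) (hstrat : Stratified P) (hv : v ∉ progAtoms P)
    (hcoh : coherent P) :
    coherent (complProg v P) ↔ ¬ coherent P := by
  obtain ⟨lv, hlv⟩ := hstrat
  obtain ⟨I, hI⟩ := hcoh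
  constructor
  swap
  · intro h; exact absurd ⟨I, hI⟩ h
  rintro ⟨M, hM⟩ -
  -- the non-constraint part of P
  set P₁ : AProgram α := {r | r ∈ P ∧ r.head ≠ none} with hP₁
  have hP₁heads : ∀ r ∈ P₁, r.head ≠ none := fun r hr => hr.2
  have hP₁strat : IsStratification P₁ lv := fun r hr => hlv r hr.1
  -- v ∈ M
  have hvM : v ∈ M := by
    by_contra hvM
    have hmem : (⟨none, ∅, ∅⟩ : ARule α) ∈ reduct (complProg v P) M := by
      refine ⟨⟨none, ∅, {v}⟩, Or.inr rfl, ?_, rfl⟩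
      intro a ha; simp only [Set.mem_singleton_iff] at ha; subst ha; exact hvM
    obtain ⟨h, hh, _⟩ := hM.1 _ hmem ⟨by simp, by simp⟩
    exact Option.some_ne_none h hh.symm
  set N : Set α := M \ {v} with hNdef
  have hNsubM : N ⊆ M := Set.diff_subset
  have hNv : v ∉ N := fun h => h.2 rfl
  have hmemN : ∀ a, a ∈ M → a ≠ v → a ∈ N := fun a ha hav => ⟨ha, hav⟩
  have hNM : N ⊂ M := ⟨hNsubM, fun hMN => (hMN hvM).2 rfl⟩
  -- v must be supported: there is a violated constraint of P w.r.t. N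
  have hconstr : ∃ r ∈ P, r.head = none ∧ r.pos ⊆ N ∧ ∀ a ∈ r.neg, a ∉ M := by
    have hnotmod : ¬ isModel N (reduct (complProg v P) M) := hM.2 N hNM
    simp only [isModel, not_forall] at hnotmod
    obtain ⟨r', hr'mem, hr'nsat⟩ := hnotmod
    obtain ⟨q, hq, hqneg, rfl⟩ := hr'mem
    rw [satRule, _root_.not_imp] at hr'nsat
    obtain ⟨hbody, hno⟩ := hr'nsat
    rcases hq with (hq | hq) | hq
    · -- q is a proper rule of P: it cannot be violated by N
      exfalso
      obtain ⟨h, hh⟩ := Option.ne_none_iff_exists'.mp hq.2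
      have hbM : bodyTrue M (⟨q.head, q.pos, ∅⟩ : ARule α) :=
        ⟨hbody.1.trans hNsubM, by simp⟩
      obtain ⟨h', hh', hh'M⟩ := hM.1 _ ⟨q, Or.inl (Or.inl ⟨hq.1, hq.2⟩), hqneg, rfl⟩ hbM
      have hh'v : h' ≠ v := by
        simp only at hh'
        exact (atom_ne hv hq.1).1 h' hh'
      exact hno ⟨h', hh', hmemN h' hh'M hh'v⟩
    · -- q comes from a constraint of P
      obtain ⟨r, hrP, hrhead, rfl⟩ := hq
      exact ⟨r, hrP, hrhead, hbody.1, hqneg⟩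
    · -- q is the constraint :- not v
      exfalso
      rw [Set.mem_singleton_iff] at hq
      subst hq
      exact hqneg v rfl hvM
  obtain ⟨rc, hrcP, hrchead, hrcpos, hrcneg⟩ := hconstr
  -- N is an answer set of P₁
  have hNas : isAnswerSet P₁ N := by
    constructor
    · rintro s' ⟨s, hs, hsneg, rfl⟩ hbody
      have hsnegM : ∀ a ∈ s.neg, a ∉ M := by
        intro a ha haM
        exact hsneg a ha (hmemN a haM ((atom_ne hv hs.1).2.2 a ha))
      have hbM : bodyTrue M (⟨s.head, s.pos, ∅⟩ : ARule α) :=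
        ⟨hbody.1.trans hNsubM, by simp⟩
      obtain ⟨h, hh, hhM⟩ := hM.1 _ ⟨s, Or.inl (Or.inl hs), hsnegM, rfl⟩ hbM
      have hhv : h ≠ v := by
        simp only at hh
        exact (atom_ne hv hs.1).1 h hh
      exact ⟨h, hh, hmemN h hhM hhv⟩
    · intro J hJN hJmod
      refine hM.2 (insert v J) ?_ ?_
      · have hsub : insert v J ⊆ M := Set.insert_subset hvM (hJN.1.trans hNsubM)
        obtain ⟨x, hxN, hxJ⟩ := Set.exists_of_ssubset hJN
        refine HasSubset.Subset.ssubset_of_ne hsub (fun he => ?_)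
        have : x ∈ insert v J := he ▸ hNsubM hxN
        rcases this with h | h
        · exact hNv (h ▸ hxN)
        · exact hxJ h
      · rintro s' ⟨q2, hq2, hq2neg, rfl⟩ hbody2
        rcases hq2 with (hq2 | hq2) | hq2
        · -- proper rule of P
          obtain ⟨h, hh⟩ := Option.ne_none_iff_exists'.mp hq2.2
          have hq2negN : ∀ a ∈ q2.neg, a ∉ N := fun a ha haN => hq2neg a ha (hNsubM haN)
          have hposJ : q2.pos ⊆ J := by
            intro a ha
            rcases hbody2.1 ha with h' | h'
            · exact absurd h' ((atom_ne hv hq2.1).2.1 a ha)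
            · exact h'
          obtain ⟨h', hh', hh'J⟩ := hJmod _ ⟨q2, ⟨hq2.1, hq2.2⟩, hq2negN, rfl⟩
            ⟨hposJ, by simp⟩
          exact ⟨h', hh', Set.mem_insert_of_mem v hh'J⟩
        · -- rule v :- B from a constraint: head v is in insert v J
          obtain ⟨r, hrP, hrhead, rfl⟩ := hq2
          exact ⟨v, rfl, Set.mem_insert v J⟩
        · -- constraint :- not v is not in the reduct
          exfalso
          rw [Set.mem_singleton_iff] at hq2
          subst hq2
          exact hq2neg v rfl hvM
  -- I is an answer set of P₁ as well
  have hIas : isAnswerSet P₁ I := answerSet_restrict hI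
  -- uniqueness: I = N
  have hIN : I = N := strat_unique hP₁strat hP₁heads hIas hNas
  -- contradiction: the constraint rc of P is violated by I
  have hrcnegI : ∀ a ∈ rc.neg, a ∉ I := by
    intro a ha haI
    exact hrcneg a ha (hNsubM (hIN ▸ haI))
  have hmem : (⟨rc.head, rc.pos, ∅⟩ : ARule α) ∈ reduct P I := ⟨rc, hrcP, hrcnegI, rfl⟩
  obtain ⟨h, hh, _⟩ := hI.1 _ hmem ⟨by rw [hIN]; exact hrcpos, by simp⟩
  simp only at hh
  rw [hrchead] at hh
  exact Option.some_ne_none h hh.symm
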